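/- Let m = qn + r with q, r nonnegative integers and n a positive integer. If 0 ≤ r < n/2, then U(m,n) = qn; if n/2 ≤ r < n, then U(m,n) = qn + 2r − n. In each case this means: every A ∈ D(m,n) satisfies tropdet A at most the stated value, and there exists A ∈ D(m,n) whose tropdet equals the stated value. -/

import Mathlib

/-- D(m,n): n×n matrices with nonnegative integer entries, all row and column sums equal m. -/
def IsDSM (m n : ℕ) (A : Fin n → Fin n → ℕ) : Prop :=
  (∀ i, ∑ j, A i j = m) ∧ (∀ j, ∑ i, A i j = m)

/-- tropdet A: minimum of a transversal sum over all permutations. -/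
def tropdet {n : ℕ} (A : Fin n → Fin n → ℕ) : ℕ :=
  Finset.univ.inf' Finset.univ_nonempty fun σ : Equiv.Perm (Fin n) => ∑ i, A i (σ i)

private lemma sum_range_iteP (N c : ℕ) :
    ∑ k ∈ Finset.range N, (if k < c then (1:ℕ) else 0) = min c N := by
  induction N with
  | zero => simp
  | succ N ih => rw [Finset.sum_range_succ, ih]; split_ifs <;> omega

private lemma sum_fin_ite2 (n a c : ℕ) (hac : a ≤ c) (hc : c ≤ n) :
    ∑ k : Fin n, (if a ≤ (k:ℕ) ∧ (k:ℕ) < c then (1:ℕ) else 0) = c - a := by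
  have h1 : ∀ k : ℕ, (if a ≤ k ∧ k < c then (1:ℕ) else 0) + (if k < a then 1 else 0)
      = (if k < c then 1 else 0) := by intro k; split_ifs <;> omega
  have h4 : ∑ k ∈ Finset.range n, ((if a ≤ k ∧ k < c then (1:ℕ) else 0) + (if k < a then 1 else 0))
      = min c n := by simp_rw [h1]; exact sum_range_iteP n c
  rw [Finset.sum_add_distrib, sum_range_iteP] at h4
  rw [Fin.sum_univ_eq_sum_range (fun k => if a ≤ k ∧ k < c then (1:ℕ) else 0)]
  omega

private lemma sum_fin_lt (n c : ℕ) (hc : c ≤ n) :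
    ∑ k : Fin n, (if (k:ℕ) < c then (1:ℕ) else 0) = c := by
  have h := sum_fin_ite2 n 0 c (Nat.zero_le _) hc
  rw [Nat.sub_zero] at h
  rw [← h]
  exact Finset.sum_congr rfl fun k _ => by split_ifs <;> omega

private lemma sum_fin_ge (n a : ℕ) (ha : a ≤ n) :
    ∑ k : Fin n, (if a ≤ (k:ℕ) then (1:ℕ) else 0) = n - a := by
  have h := sum_fin_ite2 n a n ha le_rfl
  rw [← h]
  exact Finset.sum_congr rfl fun k _ => by have := k.isLt; split_ifs <;> omega

private lemma sum_split {n : ℕ} (g : Fin n → ℕ) {i j : Fin n} (hji : j ≠ i) :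
    ∑ k, g k = g i + (g j + ∑ k ∈ (Finset.univ.erase i).erase j, g k) := by
  rw [← Finset.add_sum_erase _ g (Finset.mem_univ i),
      ← Finset.add_sum_erase _ g (Finset.mem_erase.mpr ⟨hji, Finset.mem_univ j⟩)]

/-- If `σ₀` realizes the tropical determinant, then `n * A i (σ₀ i) + tropdet A ≤ 2m`
for every `i`.  This follows by comparing `σ₀` with `σ₀` composed with transpositions. -/
private lemma key_lemma (m n : ℕ) (A : Fin n → Fin n → ℕ) (hA : IsDSM m n A) :
    ∃ σ₀ : Equiv.Perm (Fin n), tropdet A = ∑ i, A i (σ₀ i) ∧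
      ∀ i, n * A i (σ₀ i) + tropdet A ≤ 2 * m := by
  obtain ⟨hrow, hcol⟩ := hA
  obtain ⟨σ₀, -, hσ₀⟩ := Finset.exists_mem_eq_inf'
    (s := (Finset.univ : Finset (Equiv.Perm (Fin n)))) Finset.univ_nonempty
    (fun σ => ∑ i, A i (σ i))
  have htd : tropdet A = ∑ i, A i (σ₀ i) := hσ₀
  refine ⟨σ₀, htd, fun i => ?_⟩
  have hswap : ∀ j : Fin n, A i (σ₀ i) + A j (σ₀ j) ≤ A i (σ₀ j) + A j (σ₀ i) := by
    intro j
    rcases eq_or_ne j i with rfl | hji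
    · exact le_refl _
    · set σ' := σ₀ * Equiv.swap i j with hσ'def
      have hle : tropdet A ≤ ∑ k, A k (σ' k) :=
        Finset.inf'_le _ (Finset.mem_univ σ')
      have e1 : ∑ k, A k (σ' k)
          = A i (σ' i) + (A j (σ' j) + ∑ k ∈ (Finset.univ.erase i).erase j, A k (σ' k)) :=
        sum_split _ hji
      have e2 : ∑ k, A k (σ₀ k)
          = A i (σ₀ i) + (A j (σ₀ j) + ∑ k ∈ (Finset.univ.erase i).erase j, A k (σ₀ k)) :=
        sum_split _ hji
      have hrest : ∑ k ∈ (Finset.univ.erase i).erase j, A k (σ' k)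
          = ∑ k ∈ (Finset.univ.erase i).erase j, A k (σ₀ k) := by
        refine Finset.sum_congr rfl fun k hk => ?_
        simp only [Finset.mem_erase] at hk
        rw [hσ'def]
        simp [Equiv.Perm.mul_apply, Equiv.swap_apply_of_ne_of_ne hk.2.1 hk.1]
      have hi' : σ' i = σ₀ j := by
        simp [hσ'def, Equiv.Perm.mul_apply]
      have hj' : σ' j = σ₀ i := by
        simp [hσ'def, Equiv.Perm.mul_apply]
      rw [e1, hrest, hi', hj'] at hle
      rw [htd, e2] at hle
      omega
  have hsum := Finset.sum_le_sum (s := (Finset.univ : Finset (Fin n))) fun j _ => hswap j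
  rw [Finset.sum_add_distrib, Finset.sum_add_distrib, Finset.sum_const, Finset.card_univ,
    Fintype.card_fin, smul_eq_mul, Equiv.sum_comp σ₀ (A i), hrow i, hcol (σ₀ i)] at hsum
  rw [htd]
  omega

private lemma upper1 (n q r : ℕ) (h2r : 2 * r < n)
    (A : Fin n → Fin n → ℕ) (hA : IsDSM (q * n + r) n A) : tropdet A ≤ q * n := by
  obtain ⟨σ₀, htd, hkey⟩ := key_lemma _ n A hA
  by_contra hlt
  push_neg at hlt
  have hAq : ∀ i, A i (σ₀ i) ≤ q := by
    intro i
    by_contra hq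
    push_neg at hq
    have h1 : n * (q + 1) ≤ n * A i (σ₀ i) := Nat.mul_le_mul_left _ hq
    have h2 := hkey i
    nlinarith
  have hle : tropdet A ≤ n * q := by
    rw [htd]
    calc ∑ i, A i (σ₀ i) ≤ ∑ _i : Fin n, q := Finset.sum_le_sum fun i _ => hAq i
      _ = n * q := by simp [Finset.sum_const, Finset.card_univ, mul_comm]
  nlinarith

private lemma upper2 (n q r : ℕ) (h2r : n ≤ 2 * r)
    (A : Fin n → Fin n → ℕ) (hA : IsDSM (q * n + r) n A) :
    tropdet A ≤ q * n + 2 * r - n := by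
  obtain ⟨σ₀, htd, hkey⟩ := key_lemma _ n A hA
  have hs : (q * n + 2 * r - n) + n = q * n + 2 * r :=
    Nat.sub_add_cancel (le_trans h2r (Nat.le_add_left _ _))
  by_contra hlt
  push_neg at hlt
  have hAq : ∀ i, A i (σ₀ i) ≤ q := by
    intro i
    by_contra hq
    push_neg at hq
    have h1 : n * (q + 1) ≤ n * A i (σ₀ i) := Nat.mul_le_mul_left _ hq
    have h2 := hkey i
    nlinarith
  have hle : tropdet A ≤ n * q := by
    rw [htd]
    calc ∑ i, A i (σ₀ i) ≤ ∑ _i : Fin n, q := Finset.sum_le_sum fun i _ => hAq i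
      _ = n * q := by simp [Finset.sum_const, Finset.card_univ, mul_comm]
  nlinarith

private lemma exists1 (n q r : ℕ) (hn : 0 < n) (hr : r < n) :
    ∃ A : Fin n → Fin n → ℕ, IsDSM (q * n + r) n A ∧ tropdet A = q * n := by
  haveI : NeZero n := ⟨hn.ne'⟩
  refine ⟨fun i j => q + (if ((j - i : Fin n) : ℕ) < r then 1 else 0), ⟨?_, ?_⟩, ?_⟩
  · intro i
    rw [Finset.sum_add_distrib, Finset.sum_const, Finset.card_univ, Fintype.card_fin,
      smul_eq_mul]
    have h : ∑ j : Fin n, (if ((j - i : Fin n) : ℕ) < r then (1:ℕ) else 0)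
        = ∑ k : Fin n, (if (k : ℕ) < r then (1:ℕ) else 0) :=
      Equiv.sum_comp (Equiv.subRight i) (fun k : Fin n => if (k:ℕ) < r then (1:ℕ) else 0)
    rw [h, sum_fin_lt n r hr.le]
    ring
  · intro j
    rw [Finset.sum_add_distrib, Finset.sum_const, Finset.card_univ, Fintype.card_fin,
      smul_eq_mul]
    have h : ∑ i : Fin n, (if ((j - i : Fin n) : ℕ) < r then (1:ℕ) else 0)
        = ∑ k : Fin n, (if (k : ℕ) < r then (1:ℕ) else 0) :=
      Equiv.sum_comp (Equiv.subLeft j) (fun k : Fin n => if (k:ℕ) < r then (1:ℕ) else 0)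
    rw [h, sum_fin_lt n r hr.le]
    ring
  · apply le_antisymm
    · have hle : tropdet (fun i j => q + (if ((j - i : Fin n) : ℕ) < r then 1 else 0))
          ≤ ∑ i, (q + (if (((Equiv.addRight (⟨r, hr⟩ : Fin n)) i - i : Fin n) : ℕ) < r
              then 1 else 0)) :=
        Finset.inf'_le _ (Finset.mem_univ _)
      refine le_trans hle (le_of_eq ?_)
      have hpt : ∀ i : Fin n,
          (q + (if (((Equiv.addRight (⟨r, hr⟩ : Fin n)) i - i : Fin n) : ℕ) < r
            then 1 else 0)) = q := by
        intro i
        simp [Equiv.coe_addRight, add_sub_cancel_left]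
      rw [Finset.sum_congr rfl fun i _ => hpt i]
      simp [Finset.sum_const, Finset.card_univ, mul_comm]
    · refine Finset.le_inf' _ _ fun σ _ => ?_
      calc q * n = ∑ _i : Fin n, q := by
            simp [Finset.sum_const, Finset.card_univ, mul_comm]
        _ ≤ ∑ i, (q + (if ((σ i - i : Fin n) : ℕ) < r then 1 else 0)) :=
            Finset.sum_le_sum fun i _ => Nat.le_add_right q _

private lemma exists2 (n q r : ℕ) (hn : 0 < n) (hr : r < n) (h2r : n ≤ 2 * r) :
    ∃ A : Fin n → Fin n → ℕ, IsDSM (q * n + r) n A ∧ tropdet A = q * n + 2 * r - n := by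
  haveI : NeZero n := ⟨hn.ne'⟩
  have hr1 : 1 ≤ r := by omega
  set a := n - r with hadef
  have ha_lt : a < n := by omega
  have h2a : 2 * a ≤ n := by omega
  set B : Fin n → Fin n → ℕ := fun i j =>
    if (i : ℕ) < a then (if j = i then r else 0) else (if a ≤ (j : ℕ) then 1 else 0) with hB
  refine ⟨fun i j => q + B i j, ⟨?_, ?_⟩, ?_⟩
  · -- row sums
    intro i
    rw [Finset.sum_add_distrib, Finset.sum_const, Finset.card_univ, Fintype.card_fin,
      smul_eq_mul]
    have h : ∑ j, B i j = r := by
      by_cases hi : (i:ℕ) < a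
      · simp only [hB, if_pos hi]
        simp
      · simp only [hB, if_neg hi]
        rw [sum_fin_ge n a ha_lt.le]
        omega
    rw [h]; ring
  · -- column sums
    intro j
    rw [Finset.sum_add_distrib, Finset.sum_const, Finset.card_univ, Fintype.card_fin,
      smul_eq_mul]
    have h : ∑ i, B i j = r := by
      by_cases hj : (j:ℕ) < a
      · have hpt : ∀ i : Fin n, B i j = if j = i then r else 0 := by
          intro i
          simp only [hB]
          by_cases hi : (i:ℕ) < a
          · simp [hi]
          · have hne : j ≠ i := by intro h; rw [h] at hj; omega
            simp [hi, hne, show ¬ a ≤ (j:ℕ) by omega]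
        rw [Finset.sum_congr rfl fun i _ => hpt i]
        simp
      · have hpt : ∀ i : Fin n, B i j = if a ≤ (i:ℕ) then 1 else 0 := by
          intro i
          simp only [hB]
          by_cases hi : (i:ℕ) < a
          · have hne : j ≠ i := by intro h; rw [h] at hj; omega
            simp [hi, hne, show ¬ a ≤ (i:ℕ) by omega]
          · simp [hi, show a ≤ (j:ℕ) by omega, show a ≤ (i:ℕ) by omega]
        rw [Finset.sum_congr rfl fun i _ => hpt i, sum_fin_ge n a ha_lt.le]
        omega
    rw [h]; ring
  · -- tropdet value
    have hs : (q * n + 2 * r - n) + n = q * n + 2 * r :=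
      Nat.sub_add_cancel (le_trans h2r (Nat.le_add_left _ _))
    set α : Fin n := ⟨a, ha_lt⟩ with hα
    apply le_antisymm
    · have hle : tropdet (fun i j => q + B i j)
          ≤ ∑ i, (q + B i ((Equiv.addRight α) i)) :=
        Finset.inf'_le _ (Finset.mem_univ _)
      refine le_trans hle ?_
      have hpt : ∀ i : Fin n, B i (i + α) = if a ≤ (i:ℕ) ∧ (i:ℕ) < n - a then 1 else 0 := by
        intro i
        have hvadd : ((i + α : Fin n) : ℕ) = ((i:ℕ) + a) % n := by
          rw [Fin.val_add]
        simp only [hB]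
        by_cases hi : (i:ℕ) < a
        · have hne : i + α ≠ i := by
            intro h
            have h2 : ((i + α : Fin n) : ℕ) = (i : ℕ) := by rw [h]
            rw [hvadd, Nat.mod_eq_of_lt (by omega)] at h2
            omega
          simp [hi, hne, show ¬(a ≤ (i:ℕ) ∧ (i:ℕ) < n - a) by omega]
        · simp only [if_neg hi]
          by_cases h2 : (i:ℕ) < n - a
          · rw [hvadd, Nat.mod_eq_of_lt (by omega)]
            have := i.isLt
            split_ifs <;> omega
          · have hge : n ≤ (i:ℕ) + a := by omega
            have hmod : ((i:ℕ) + a) % n = (i:ℕ) + a - n := by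
              rw [Nat.mod_eq_sub_mod hge]
              exact Nat.mod_eq_of_lt (by omega)
            rw [hvadd, hmod]
            have := i.isLt
            split_ifs <;> omega
      have hcalc : ∑ i, (q + B i ((Equiv.addRight α) i)) = n * q + (n - a - a) := by
        rw [Finset.sum_add_distrib, Finset.sum_const, Finset.card_univ, Fintype.card_fin,
          smul_eq_mul]
        congr 1
        have h5 : ∀ i : Fin n, B i ((Equiv.addRight α) i)
            = if a ≤ (i:ℕ) ∧ (i:ℕ) < n - a then 1 else 0 := by
          intro i; rw [Equiv.coe_addRight]; exact hpt i
        rw [Finset.sum_congr rfl fun i _ => h5 i,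
          sum_fin_ite2 n a (n - a) (by omega) (by omega)]
      rw [hcalc]
      have h1 : n - a - a + n = 2 * r := by omega
      nlinarith
    · refine Finset.le_inf' _ _ fun σ _ => ?_
      show q * n + 2 * r - n ≤ ∑ i, (q + B i (σ i))
      have hBsum : r ≤ (∑ i, B i (σ i)) + a := by
        set T := Finset.univ.filter (fun i : Fin n => a ≤ (i:ℕ) ∧ a ≤ ((σ i : Fin n):ℕ)) with hT
        have h1 : T.card ≤ ∑ i, B i (σ i) := by
          calc T.card = ∑ i ∈ T, 1 := by rw [Finset.card_eq_sum_ones]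
            _ ≤ ∑ i ∈ T, B i (σ i) := by
                refine Finset.sum_le_sum fun i hi => ?_
                simp only [hT, Finset.mem_filter] at hi
                have hB1 : B i (σ i) = 1 := by
                  simp [hB, show ¬ (i:ℕ) < a by omega, hi.2.2]
                omega
            _ ≤ ∑ i, B i (σ i) := Finset.sum_le_sum_of_subset (Finset.filter_subset _ _)
        have hScard : (Finset.univ.filter (fun i : Fin n => a ≤ (i:ℕ))).card + a = n := by
          rw [Finset.card_filter]
          rw [sum_fin_ge n a ha_lt.le]
          omega
        have hLcard : (Finset.univ.filter (fun j : Fin n => (j:ℕ) < a)).card = a := by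
          rw [Finset.card_filter]
          exact sum_fin_lt n a ha_lt.le
        set W := Finset.univ.filter (fun i : Fin n => a ≤ (i:ℕ) ∧ ((σ i : Fin n):ℕ) < a) with hW
        have hWcard : W.card ≤ a := by
          rw [← hLcard]
          apply Finset.card_le_card_of_injOn σ
          · intro i hi
            rw [hW, Finset.coe_filter] at hi
            exact Finset.mem_filter.mpr ⟨Finset.mem_univ _, hi.2.2⟩
          · exact σ.injective.injOn
        have hsub : Finset.univ.filter (fun i : Fin n => a ≤ (i:ℕ)) ⊆ T ∪ W := by
          intro i hi
          simp only [Finset.mem_filter] at hi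
          rcases le_or_gt a ((σ i : Fin n):ℕ) with h | h
          · exact Finset.mem_union_left _ (Finset.mem_filter.mpr ⟨Finset.mem_univ _, hi.2, h⟩)
          · exact Finset.mem_union_right _ (Finset.mem_filter.mpr ⟨Finset.mem_univ _, hi.2, h⟩)
        have hcards := (Finset.card_le_card hsub).trans (Finset.card_union_le T W)
        have hr_eq : (Finset.univ.filter (fun i : Fin n => a ≤ (i:ℕ))).card = r := by omega
        nlinarith
      have hfin : ∑ i, (q + B i (σ i)) = n * q + ∑ i, B i (σ i) := by
        rw [Finset.sum_add_distrib, Finset.sum_const, Finset.card_univ, Fintype.card_fin,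
          smul_eq_mul]
      rw [hfin]
      have ha' : a + r = n := by omega
      linarith

/-- Sharp upper bounds on tropdet over D(m,n): if m = qn + r with 0 ≤ r < n/2 then
U(m,n) = qn; if n/2 ≤ r < n then U(m,n) = qn + 2r - n. -/
theorem U_eq (m n q r : ℕ) (hn : 0 < n) (hm : m = q * n + r) (hr : r < n) :
    (2 * r < n →
      (∀ A : Fin n → Fin n → ℕ, IsDSM m n A → tropdet A ≤ q * n) ∧
      (∃ A : Fin n → Fin n → ℕ, IsDSM m n A ∧ tropdet A = q * n)) ∧
    (n ≤ 2 * r →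
      (∀ A : Fin n → Fin n → ℕ, IsDSM m n A → tropdet A ≤ q * n + 2 * r - n) ∧
      (∃ A : Fin n → Fin n → ℕ, IsDSM m n A ∧ tropdet A = q * n + 2 * r - n)) := by
  subst hm
  exact ⟨fun h2r => ⟨fun A hA => upper1 n q r h2r A hA, exists1 n q r hn hr⟩,
    fun h2r => ⟨fun A hA => upper2 n q r h2r A hA, exists2 n q r hn hr h2r⟩⟩
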